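/- Let n be a positive integer, let P ∈ ℝ^{n×n} be symmetric positive definite, let M ∈ ℝ^{n×n}, and set Q = −(PM + MᵀP). Assume Q is positive semidefinite and that no nonzero complex eigenvector of M lies in the kernel of Q (viewing Q as acting on ℂⁿ, i.e. if Mv = λv with v ≠ 0 then v*Qv > 0). Then every eigenvalue λ ∈ ℂ of M satisfies Re(λ) < 0. -/

import Mathlib

open Matrix

lemma map_re_nonneg' {n : ℕ} (P : Matrix (Fin n) (Fin n) ℝ) (hP : P.PosSemidef)
    (v : Fin n → ℂ) : 0 ≤ (star v ⬝ᵥ ((P.map Complex.ofReal) *ᵥ v)).re := by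
  have ha := hP.dotProduct_mulVec_nonneg (fun i => (v i).re)
  have hb := hP.dotProduct_mulVec_nonneg (fun i => (v i).im)
  simp only [RCLike.re_to_real, dotProduct, mulVec, Pi.star_apply] at ha hb ⊢
  rw [Complex.re_sum]
  refine (add_nonneg ha hb).trans_eq (Eq.symm ?_)
  rw [← Finset.sum_add_distrib]
  refine Finset.sum_congr rfl fun i _ => ?_
  simp only [Finset.mul_sum, Complex.re_sum, Finset.sum_mul]
  rw [← Finset.sum_add_distrib]
  refine Finset.sum_congr rfl fun j _ => ?_
  simp [Complex.mul_re, Complex.mul_im, map_apply]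

/-- strict Lyapunov eigenvalue lemma: Let `P` be symmetric positive
definite, `M` arbitrary, and `Q = -(PM + MᵀP)`. If `Q` is positive semidefinite and
no nonzero complex eigenvector of `M` lies in the kernel of `Q` (i.e. `Mv = λv` with
`v ≠ 0` implies `v*Qv > 0`), then every complex eigenvalue of `M` has strictly
negative real part. -/
theorem re_eigenvalue_neg_of_strict_lyapunov
    (n : ℕ) (hn : 0 < n) (P M Q : Matrix (Fin n) (Fin n) ℝ)
    (hP : P.PosDef)
    (hQ : Q = -(P * M + Mᵀ * P))
    (hQpsd : Q.PosSemidef)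
    (hQev : ∀ (μ : ℂ) (v : Fin n → ℂ), v ≠ 0 →
      (M.map Complex.ofReal) *ᵥ v = μ • v →
      0 < (star v ⬝ᵥ ((Q.map Complex.ofReal) *ᵥ v)).re) :
    ∀ μ ∈ spectrum ℂ (M.map Complex.ofReal), μ.re < 0 := by
  intro μ hμ
  -- get an eigenvector
  rw [spectrum.mem_iff] at hμ
  rw [Matrix.isUnit_iff_isUnit_det, isUnit_iff_ne_zero, not_not,
    ← Matrix.exists_mulVec_eq_zero_iff] at hμ
  obtain ⟨v, hv, hveq⟩ := hμ
  have hMv : (M.map Complex.ofReal) *ᵥ v = μ • v := by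
    have : (algebraMap ℂ (Matrix (Fin n) (Fin n) ℂ)) μ = μ • (1 : Matrix (Fin n) (Fin n) ℂ) := by
      simp [Algebra.algebraMap_eq_smul_one]
    rw [this] at hveq
    have := hveq
    rw [Matrix.sub_mulVec, Matrix.smul_mulVec, Matrix.one_mulVec, sub_eq_zero] at this
    exact this.symm
  -- conjugate eigenvector relation
  have hconj : (M.map Complex.ofReal) *ᵥ star v = (starRingEnd ℂ μ) • star v := by
    have hct : (M.map Complex.ofReal)ᴴ = Mᵀ.map Complex.ofReal := by
      ext i j; simp [conjTranspose_apply, map_apply]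
    have htr : Mᵀ.map Complex.ofReal = (M.map Complex.ofReal)ᵀ := by
      ext i j; simp [map_apply]
    have h := congrArg star hMv
    rw [Matrix.star_mulVec, hct, htr, Matrix.vecMul_transpose] at h
    rw [h]
    ext i; simp [mul_comm]
  -- key identity for v* Q v
  have key : star v ⬝ᵥ ((Q.map Complex.ofReal) *ᵥ v)
      = -((μ + starRingEnd ℂ μ) * (star v ⬝ᵥ ((P.map Complex.ofReal) *ᵥ v))) := by
    have hQmap : Q.map Complex.ofReal
        = -((P.map Complex.ofReal) * (M.map Complex.ofReal)
            + (M.map Complex.ofReal)ᴴ * (P.map Complex.ofReal)) := by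
      subst hQ
      ext i j
      simp [map_apply, mul_apply, conjTranspose_apply, Finset.sum_add_distrib]
    rw [hQmap]
    rw [Matrix.neg_mulVec, Matrix.add_mulVec, dotProduct_neg, dotProduct_add,
      ← Matrix.mulVec_mulVec, ← Matrix.mulVec_mulVec, hMv, Matrix.mulVec_smul,
      dotProduct_smul]
    have h2 : star v ⬝ᵥ ((M.map Complex.ofReal)ᴴ *ᵥ ((P.map Complex.ofReal) *ᵥ v))
        = (starRingEnd ℂ μ) * (star v ⬝ᵥ ((P.map Complex.ofReal) *ᵥ v)) := by
      rw [Matrix.dotProduct_mulVec, Matrix.vecMul_conjTranspose, star_star, hMv]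
      simp [star_smul, smul_dotProduct, smul_eq_mul]
    rw [h2, smul_eq_mul]; ring
  -- take real parts
  have hre : (star v ⬝ᵥ ((Q.map Complex.ofReal) *ᵥ v)).re
      = -(2 * μ.re * (star v ⬝ᵥ ((P.map Complex.ofReal) *ᵥ v)).re) := by
    rw [key]
    have : μ + starRingEnd ℂ μ = ((2 * μ.re : ℝ) : ℂ) := by
      apply Complex.ext
      · simp only [Complex.add_re, Complex.conj_re, Complex.ofReal_re]; ring
      · simp
    rw [this, Complex.neg_re, Complex.re_ofReal_mul]
  have hpos := hQev μ v hv hMv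
  have hp := map_re_nonneg' P hP.posSemidef v
  rw [hre] at hpos
  nlinarith
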